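/- Let θ = (α, α*, γ, μ) be dual feasible, let (β°, β₀°, ξ°, ξ*°, ε°) be primal feasible, let θ° be any point of ℝ^{2n+k₁+k₂}, and assume the zero duality gap identity ½‖β°‖² + C(νε° + (1/n)Σᵢ(ξ°ᵢ + ξ*°ᵢ)) = −f(θ°). Then ½ ‖β(θ) − β°‖² ≤ f(θ) − f(θ°). -/
import Mathlib


open Matrix BigOperators

/-- Index type for the dual variables θ = (α, α*, γ, μ). -/
abbrev dIdx (n k₁ k₂ : ℕ) := (Fin n ⊕ Fin n) ⊕ (Fin k₁ ⊕ Fin k₂)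

/-- The stacked matrix M = (X; −X; A; −Γ). -/
noncomputable def Mmat {n p k₁ k₂ : ℕ} (X : Matrix (Fin n) (Fin p) ℝ)
    (A : Matrix (Fin k₁) (Fin p) ℝ) (Γ : Matrix (Fin k₂) (Fin p) ℝ) :
    Matrix (dIdx n k₁ k₂) (Fin p) ℝ :=
  Matrix.fromRows (Matrix.fromRows X (-X)) (Matrix.fromRows A (-Γ))

/-- The linear term l = (y, −y, b, −d). -/
noncomputable def lvec {n k₁ k₂ : ℕ} (y : Fin n → ℝ) (b : Fin k₁ → ℝ)
    (d : Fin k₂ → ℝ) : dIdx n k₁ k₂ → ℝ :=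
  Sum.elim (Sum.elim y (-y)) (Sum.elim b (-d))

/-- The dual objective f(θ) = ½ θᵀ Q̄ θ + lᵀ θ with Q̄ = M Mᵀ. -/
noncomputable def fObj {n p k₁ k₂ : ℕ} (X : Matrix (Fin n) (Fin p) ℝ)
    (A : Matrix (Fin k₁) (Fin p) ℝ) (Γ : Matrix (Fin k₂) (Fin p) ℝ)
    (y : Fin n → ℝ) (b : Fin k₁ → ℝ) (d : Fin k₂ → ℝ)
    (θ : dIdx n k₁ k₂ → ℝ) : ℝ :=
  (1 / 2) * (θ ⬝ᵥ ((Mmat X A Γ * (Mmat X A Γ)ᵀ) *ᵥ θ)) + lvec y b d ⬝ᵥ θ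

/-- β(θ) = −Xᵀ(α − α*) − Aᵀγ + Γᵀμ for θ = (α, α*, γ, μ). -/
noncomputable def betaOf {n p k₁ k₂ : ℕ} (X : Matrix (Fin n) (Fin p) ℝ)
    (A : Matrix (Fin k₁) (Fin p) ℝ) (Γ : Matrix (Fin k₂) (Fin p) ℝ)
    (θ : dIdx n k₁ k₂ → ℝ) : Fin p → ℝ :=
  -(Xᵀ *ᵥ fun i => θ (.inl (.inl i)) - θ (.inl (.inr i)))
    - Aᵀ *ᵥ (fun j => θ (.inr (.inl j))) + Γᵀ *ᵥ (fun j => θ (.inr (.inr j)))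

/-- Dual feasibility of θ = (α, α*, γ, μ). -/
def DualFeasible {n k₁ k₂ : ℕ} (C ν : ℝ) (θ : dIdx n k₁ k₂ → ℝ) : Prop :=
  (∀ i : Fin n, 0 ≤ θ (.inl (.inl i)) ∧ θ (.inl (.inl i)) ≤ C / n) ∧
  (∀ i : Fin n, 0 ≤ θ (.inl (.inr i)) ∧ θ (.inl (.inr i)) ≤ C / n) ∧
  (∑ i : Fin n, (θ (.inl (.inl i)) + θ (.inl (.inr i))) ≤ C * ν) ∧
  (∑ i : Fin n, (θ (.inl (.inl i)) - θ (.inl (.inr i))) = 0) ∧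
  (∀ j : Fin k₁, 0 ≤ θ (.inr (.inl j)))

/-- Primal feasibility of (β, β₀, ξ, ξ*, ε). -/
def PrimalFeasible {n p k₁ k₂ : ℕ} (X : Matrix (Fin n) (Fin p) ℝ)
    (A : Matrix (Fin k₁) (Fin p) ℝ) (Γ : Matrix (Fin k₂) (Fin p) ℝ)
    (y : Fin n → ℝ) (b : Fin k₁ → ℝ) (d : Fin k₂ → ℝ)
    (β : Fin p → ℝ) (β₀ : ℝ) (ξ ξs : Fin n → ℝ) (ε : ℝ) : Prop :=
  (∀ i, X i ⬝ᵥ β + β₀ - y i ≤ ε + ξ i) ∧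
  (∀ i, y i - X i ⬝ᵥ β - β₀ ≤ ε + ξs i) ∧
  (∀ i, 0 ≤ ξ i) ∧ (∀ i, 0 ≤ ξs i) ∧ 0 ≤ ε ∧
  (∀ j, (A *ᵥ β) j ≤ b j) ∧ Γ *ᵥ β = d

/-- for any dual feasible θ, primal feasible (β°, β₀°, ξ°, ξ*°, ε°)
and θ° satisfying the zero-duality-gap identity, ½‖β(θ) − β°‖² ≤ f(θ) − f(θ°). -/
theorem stmt16 (n p k₁ k₂ : ℕ) (X : Matrix (Fin n) (Fin p) ℝ) (y : Fin n → ℝ)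
    (A : Matrix (Fin k₁) (Fin p) ℝ) (Γ : Matrix (Fin k₂) (Fin p) ℝ)
    (b : Fin k₁ → ℝ) (d : Fin k₂ → ℝ) (C ν : ℝ)
    (hC : 0 < C) (hν : ν ∈ Set.Ioc (0 : ℝ) 1)
    (θ : dIdx n k₁ k₂ → ℝ) (hθ : DualFeasible C ν θ)
    (βopt : Fin p → ℝ) (β₀opt : ℝ) (ξopt ξsopt : Fin n → ℝ) (εopt : ℝ)
    (hprim : PrimalFeasible X A Γ y b d βopt β₀opt ξopt ξsopt εopt)
    (θopt : dIdx n k₁ k₂ → ℝ)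
    (hgap : (1 / 2) * (βopt ⬝ᵥ βopt)
        + C * (ν * εopt + (1 / (n : ℝ)) * ∑ i, (ξopt i + ξsopt i)) =
          -(fObj X A Γ y b d θopt)) :
    (1 / 2) * ((betaOf X A Γ θ - βopt) ⬝ᵥ (betaOf X A Γ θ - βopt)) ≤
      fObj X A Γ y b d θ - fObj X A Γ y b d θopt := by
  obtain ⟨hαb, hasb, hsum, heq, hγ⟩ := hθ
  obtain ⟨hp1, hp2, hξ, hξs, hε, hAb, hΓd⟩ := hprim
  set α : Fin n → ℝ := fun i => θ (.inl (.inl i)) with hαdef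
  set as : Fin n → ℝ := fun i => θ (.inl (.inr i)) with hasdef
  set γv : Fin k₁ → ℝ := fun j => θ (.inr (.inl j)) with hγdef
  set μv : Fin k₂ → ℝ := fun j => θ (.inr (.inr j)) with hμdef
  set g : Fin p → ℝ := betaOf X A Γ θ with hg
  -- Mᵀ θ = -g
  have hMt : (Mmat X A Γ)ᵀ *ᵥ θ = -g := by
    funext j
    simp only [hg, betaOf, Mmat, Matrix.mulVec, dotProduct,
      Matrix.transpose_apply, Fintype.sum_sum_type,
      Matrix.fromRows_apply_inl, Matrix.fromRows_apply_inr,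
      Pi.neg_apply, Pi.add_apply, Pi.sub_apply, Matrix.neg_apply,
      Finset.sum_sub_distrib, neg_mul, mul_sub, neg_sub, neg_add_rev, neg_neg,
      Finset.sum_neg_distrib]
    ring
  -- quadratic form identity
  have hquad : θ ⬝ᵥ ((Mmat X A Γ * (Mmat X A Γ)ᵀ) *ᵥ θ) = g ⬝ᵥ g := by
    rw [← Matrix.mulVec_mulVec, Matrix.dotProduct_mulVec, ← Matrix.mulVec_transpose, hMt]
    simp [neg_dotProduct, dotProduct_neg]
  -- key scalar inequality
  have hXd : (Xᵀ *ᵥ (fun i => α i - as i)) ⬝ᵥ βopt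
      = ∑ i, (α i - as i) * (X *ᵥ βopt) i := by
    rw [Matrix.mulVec_transpose, ← Matrix.dotProduct_mulVec]
    rfl
  have hAd : (Aᵀ *ᵥ γv) ⬝ᵥ βopt = ∑ j, γv j * (A *ᵥ βopt) j := by
    rw [Matrix.mulVec_transpose, ← Matrix.dotProduct_mulVec]
    rfl
  have hΓdot : (Γᵀ *ᵥ μv) ⬝ᵥ βopt = ∑ j, μv j * d j := by
    rw [Matrix.mulVec_transpose, ← Matrix.dotProduct_mulVec, hΓd]
    rfl
  have hgdot : g ⬝ᵥ βopt = -(∑ i, (α i - as i) * (X *ᵥ βopt) i)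
      - ∑ j, γv j * (A *ᵥ βopt) j + ∑ j, μv j * d j := by
    rw [hg, betaOf, add_dotProduct, sub_dotProduct,
      neg_dotProduct, hXd, hAd, hΓdot]
  have hl : lvec y b d ⬝ᵥ θ = (∑ i, y i * α i - ∑ i, y i * as i)
      + (∑ j, b j * γv j - ∑ j, d j * μv j) := by
    simp only [lvec, dotProduct, Fintype.sum_sum_type, Sum.elim_inl, Sum.elim_inr,
      Pi.neg_apply, neg_mul, Finset.sum_neg_distrib]
    ring
  -- bound the X part
  have hterm : ∀ i : Fin n, (α i - as i) * (X *ᵥ βopt) i - (y i * α i - y i * as i)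
      ≤ α i * (εopt + ξopt i - β₀opt) + as i * (εopt + ξsopt i + β₀opt) := by
    intro i
    have hXi : (X *ᵥ βopt) i = X i ⬝ᵥ βopt := rfl
    have e1 : α i * (X i ⬝ᵥ βopt - y i) ≤ α i * (εopt + ξopt i - β₀opt) :=
      mul_le_mul_of_nonneg_left (by linarith [hp1 i]) (hαb i).1
    have e2 : as i * (y i - X i ⬝ᵥ βopt) ≤ as i * (εopt + ξsopt i + β₀opt) :=
      mul_le_mul_of_nonneg_left (by linarith [hp2 i]) (hasb i).1
    rw [hXi]; nlinarith [e1, e2]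
  have hsum1 : ∑ i, ((α i - as i) * (X *ᵥ βopt) i - (y i * α i - y i * as i))
      ≤ ∑ i, (α i * (εopt + ξopt i - β₀opt) + as i * (εopt + ξsopt i + β₀opt)) :=
    Finset.sum_le_sum fun i _ => hterm i
  have hsplit : ∑ i, (α i * (εopt + ξopt i - β₀opt) + as i * (εopt + ξsopt i + β₀opt))
      = εopt * ∑ i, (α i + as i) + ∑ i, (α i * ξopt i + as i * ξsopt i)
        + β₀opt * ∑ i, (as i - α i) := by
    rw [Finset.mul_sum, Finset.mul_sum, ← Finset.sum_add_distrib, ← Finset.sum_add_distrib]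
    exact Finset.sum_congr rfl fun i _ => by ring
  have hzero : ∑ i, (as i - α i) = (0 : ℝ) := by
    have h := heq
    simp only [Finset.sum_sub_distrib] at h ⊢
    linarith
  have hbd1 : εopt * ∑ i, (α i + as i) ≤ εopt * (C * ν) :=
    mul_le_mul_of_nonneg_left hsum hε
  have hbd2 : ∑ i, (α i * ξopt i + as i * ξsopt i) ≤ C / n * ∑ i, (ξopt i + ξsopt i) := by
    rw [Finset.mul_sum]
    refine Finset.sum_le_sum fun i _ => ?_
    have e1 : α i * ξopt i ≤ C / n * ξopt i :=
      mul_le_mul_of_nonneg_right (hαb i).2 (hξ i)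
    have e2 : as i * ξsopt i ≤ C / n * ξsopt i :=
      mul_le_mul_of_nonneg_right (hasb i).2 (hξs i)
    linarith [e1, e2, mul_add (C / (n:ℝ)) (ξopt i) (ξsopt i)]
  have hAbd : ∑ j, γv j * (A *ᵥ βopt) j ≤ ∑ j, b j * γv j := by
    refine Finset.sum_le_sum fun j _ => ?_
    calc γv j * (A *ᵥ βopt) j ≤ γv j * b j :=
          mul_le_mul_of_nonneg_left (hAb j) (hγ j)
      _ = b j * γv j := mul_comm _ _
  have hdiv : C / (n : ℝ) * ∑ i, (ξopt i + ξsopt i)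
      = C * ((1 / (n : ℝ)) * ∑ i, (ξopt i + ξsopt i)) := by ring
  have key : -(g ⬝ᵥ βopt) ≤ lvec y b d ⬝ᵥ θ
      + C * (ν * εopt + (1 / (n : ℝ)) * ∑ i, (ξopt i + ξsopt i)) := by
    rw [hgdot, hl]
    have h1 : ∑ i, ((α i - as i) * (X *ᵥ βopt) i - (y i * α i - y i * as i))
        = ∑ i, (α i - as i) * (X *ᵥ βopt) i - (∑ i, y i * α i - ∑ i, y i * as i) := by
      simp [Finset.sum_sub_distrib]
    have hzero' : β₀opt * ∑ i, (as i - α i) = 0 := by rw [hzero]; ring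
    have hcomb : C * (ν * εopt + (1 / (n : ℝ)) * ∑ i, (ξopt i + ξsopt i))
        = εopt * (C * ν) + C / (n : ℝ) * ∑ i, (ξopt i + ξsopt i) := by ring
    have hμcomm : ∑ j, μv j * d j = ∑ j, d j * μv j :=
      Finset.sum_congr rfl fun j _ => mul_comm _ _
    linarith [hsum1, hbd1, hbd2, hAbd, hzero', hsplit, h1, hcomb, hμcomm]
  -- assemble
  have hfθ : fObj X A Γ y b d θ = (1/2) * (g ⬝ᵥ g) + lvec y b d ⬝ᵥ θ := by
    rw [fObj, hquad]
  have hfopt : fObj X A Γ y b d θopt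
      = -((1 / 2) * (βopt ⬝ᵥ βopt)
        + C * (ν * εopt + (1 / (n : ℝ)) * ∑ i, (ξopt i + ξsopt i))) := by
    linarith [hgap]
  have hexp : (g - βopt) ⬝ᵥ (g - βopt)
      = g ⬝ᵥ g - 2 * (g ⬝ᵥ βopt) + βopt ⬝ᵥ βopt := by
    rw [sub_dotProduct, dotProduct_sub, dotProduct_sub,
      dotProduct_comm βopt g]
    ring
  rw [hfθ, hfopt, hexp]
  linarith [key]
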